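/- Let (Ω,μ) be a probability space, k ∈ ℕ, and (F_j)_{j≥1} a sequence of {0,1}-valued random variables such that there exists ρ ∈ (0,1) with: for every j, the conditional probability that F_j = 1 given F₁,...,F_{j-k} is at least ρ. Then for every ε > 0 there exist constants C₃, C₄ > 0 such that for all ℓ, μ({ω : Σ_{j=1}^ℓ F_j(ω) ≤ (ρ - ε)ℓ}) ≤ C₃ e^{-C₄ ℓ}. -/

import Mathlib

open MeasureTheory


-- split lemma
private lemma sum_split' {M : Type*} [AddCommMonoid M] (k' ℓ : ℕ) (hk' : 0 < k') (g : ℕ → M) :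
    ∑ j ∈ Finset.range ℓ, g j
      = ∑ r ∈ Finset.range k', ∑ s ∈ Finset.range ((ℓ - r + (k' - 1)) / k'), g (r + s * k') := by
  have hmem : ∀ r, r < k' → ∀ s : ℕ, (r + s * k' < ℓ ↔ s < (ℓ - r + (k' - 1)) / k') := by
    intro r hr s
    have h2 : s < (ℓ - r + (k' - 1)) / k' ↔ (s+1) * k' ≤ ℓ - r + (k' - 1) := by
      rw [Nat.lt_iff_add_one_le, Nat.le_div_iff_mul_le hk']
    rw [h2, add_mul, one_mul]
    generalize s * k' = x
    omega
  rw [Finset.sum_sigma']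
  refine (Finset.sum_nbij' (i := fun x : Σ _ : ℕ, ℕ => x.1 + x.2 * k')
    (j := fun a : ℕ => (⟨a % k', a / k'⟩ : Σ _ : ℕ, ℕ)) ?_ ?_ ?_ ?_ ?_).symm
  · rintro ⟨r, s⟩ hx
    simp only [Finset.mem_sigma, Finset.mem_range] at hx
    exact Finset.mem_range.mpr ((hmem r hx.1 s).mpr hx.2)
  · intro a ha
    simp only [Finset.mem_range] at ha
    simp only [Finset.mem_sigma, Finset.mem_range]
    refine ⟨Nat.mod_lt _ hk', (hmem _ (Nat.mod_lt _ hk') _).mp ?_⟩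
    rwa [Nat.mod_add_div' a k']
  · rintro ⟨r, s⟩ hx
    simp only [Finset.mem_sigma, Finset.mem_range] at hx
    have h1 : (r + s * k') % k' = r := by
      rw [Nat.add_mul_mod_self_right, Nat.mod_eq_of_lt hx.1]
    have h2 : (r + s * k') / k' = s := by
      rw [Nat.add_mul_div_right _ _ hk', Nat.div_eq_of_lt hx.1, zero_add]
    simp [h1, h2]
  · intro a ha
    exact Nat.mod_add_div' a k'
  · rintro ⟨r, s⟩ hx
    rfl


private lemma chain_chernoff {Ω : Type*} [MeasurableSpace Ω]
    (μ : Measure Ω) [IsProbabilityMeasure μ] (k : ℕ)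
    (F : ℕ → Ω → ℝ) (ρ : ℝ) (hρ0 : 0 < ρ) (hρ1 : ρ < 1)
    (hFmeas : ∀ j, Measurable (F j))
    (hF01 : ∀ j ω, F j ω = 0 ∨ F j ω = 1)
    (hcond : ∀ j : ℕ, ∀ A : Set Ω,
      MeasurableSet[⨆ i : {i : ℕ // i + k ≤ j}, MeasurableSpace.comap (F i) inferInstance] A →
      0 < μ A → ENNReal.ofReal ρ * μ A ≤ μ (A ∩ {ω | F j ω = 1}))
    (t : ℝ) (ht : 0 < t) (k' : ℕ) (hkk' : k ≤ k') (r : ℕ) :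
    ∀ n : ℕ, ∑ m ∈ Finset.range (n+1), ENNReal.ofReal (Real.exp (-t*m)) *
        μ {ω | ∑ s ∈ Finset.range n, F (r + s * k') ω = (m:ℝ)}
      ≤ ENNReal.ofReal (1 - ρ*(1 - Real.exp (-t))) ^ n := by
  have het : Real.exp (-t) < 1 := Real.exp_lt_one_iff.mpr (by linarith)
  have het0 : 0 < Real.exp (-t) := Real.exp_pos _
  have hq0 : 0 < 1 - ρ*(1 - Real.exp (-t)) := by nlinarith
  -- basic facts about partial sums
  have hSnn : ∀ n : ℕ, ∀ ω, 0 ≤ ∑ s ∈ Finset.range n, F (r + s * k') ω := by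
    intro n ω
    exact Finset.sum_nonneg fun s _ => by rcases hF01 (r + s * k') ω with h | h <;> simp [h]
  have hSle : ∀ n : ℕ, ∀ ω, ∑ s ∈ Finset.range n, F (r + s * k') ω ≤ (n:ℝ) := by
    intro n ω
    calc ∑ s ∈ Finset.range n, F (r + s * k') ω ≤ ∑ s ∈ Finset.range n, 1 :=
          Finset.sum_le_sum fun s _ => by rcases hF01 (r + s * k') ω with h | h <;> simp [h]
      _ = (n:ℝ) := by simp
  intro n
  induction n with
  | zero =>
    simp [Set.setOf_true]
  | succ n ih =>
    set j := r + n * k' with hjdef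
    -- measurability of the level sets w.r.t. the conditioning σ-algebra
    have hAmeasM : ∀ m : ℕ,
        MeasurableSet[⨆ i : {i : ℕ // i + k ≤ j}, MeasurableSpace.comap (F i) inferInstance]
          {ω | ∑ s ∈ Finset.range n, F (r + s * k') ω = (m:ℝ)} := by
      intro m
      have hsum : @Measurable Ω ℝ
          (⨆ i : {i : ℕ // i + k ≤ j}, MeasurableSpace.comap (F i) inferInstance) _
          (fun ω => ∑ s ∈ Finset.range n, F (r + s * k') ω) := by
        apply Finset.measurable_sum
        intro s hs
        have hs' : s < n := Finset.mem_range.mp hs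
        have hik : (r + s * k') + k ≤ j := by
          have : (r + s * k') + k' ≤ r + n * k' := by
            have := Nat.succ_le_of_lt hs'
            nlinarith [Nat.mul_le_mul_right k' this]
          omega
        have h1 : MeasurableSpace.comap (F (r + s * k')) inferInstance ≤
            ⨆ i : {i : ℕ // i + k ≤ j}, MeasurableSpace.comap (F i) inferInstance :=
          le_iSup (fun i : {i : ℕ // i + k ≤ j} =>
            MeasurableSpace.comap (F i) inferInstance) ⟨r + s * k', hik⟩
        exact (Measurable.of_comap_le le_rfl).mono h1 le_rfl
      exact hsum (measurableSet_singleton ((m:ℕ):ℝ))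
    have hMle : (⨆ i : {i : ℕ // i + k ≤ j}, MeasurableSpace.comap (F i) inferInstance)
        ≤ ‹MeasurableSpace Ω› := iSup_le fun i => (hFmeas i).comap_le
    have hAmeas : ∀ m : ℕ,
        MeasurableSet {ω | ∑ s ∈ Finset.range n, F (r + s * k') ω = (m:ℝ)} :=
      fun m => hMle _ (hAmeasM m)
    have hmeas1 : MeasurableSet {ω | F j ω = 1} := hFmeas j (measurableSet_singleton 1)
    have hcompl : {ω | F j ω = 0} = {ω | F j ω = 1}ᶜ := by
      ext ω; rcases hF01 j ω with h | h <;> simp [h]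
    -- split each level set of S_{n+1} along the value of F j
    have hsplit1 : ∀ m : ℝ,
        {ω | ∑ s ∈ Finset.range (n+1), F (r + s * k') ω = m} ∩ {ω | F j ω = 1}
          = {ω | ∑ s ∈ Finset.range n, F (r + s * k') ω = m - 1} ∩ {ω | F j ω = 1} := by
      intro m; ext ω
      simp only [Set.mem_inter_iff, Set.mem_setOf_eq, Finset.sum_range_succ, ← hjdef]
      constructor
      · rintro ⟨h1, h2⟩; rw [h2] at h1; exact ⟨by linarith, h2⟩
      · rintro ⟨h1, h2⟩; exact ⟨by rw [h2]; linarith, h2⟩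
    have hsplit0 : ∀ m : ℝ,
        {ω | ∑ s ∈ Finset.range (n+1), F (r + s * k') ω = m} ∩ {ω | F j ω = 1}ᶜ
          = {ω | ∑ s ∈ Finset.range n, F (r + s * k') ω = m} ∩ {ω | F j ω = 1}ᶜ := by
      intro m; ext ω
      simp only [Set.mem_inter_iff, Set.mem_setOf_eq, Finset.sum_range_succ, ← hjdef,
        Set.mem_compl_iff]
      constructor
      · rintro ⟨h1, h2⟩
        have h0 : F j ω = 0 := by rcases hF01 j ω with h | h; exact h; exact absurd h h2
        rw [h0] at h1; exact ⟨by linarith, h2⟩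
      · rintro ⟨h1, h2⟩
        have h0 : F j ω = 0 := by rcases hF01 j ω with h | h; exact h; exact absurd h h2
        exact ⟨by rw [h0]; linarith, h2⟩
    -- decompose the measure of each level set
    have hdecomp : ∀ m : ℕ,
        μ {ω | ∑ s ∈ Finset.range (n+1), F (r + s * k') ω = (m:ℝ)}
          = μ ({ω | ∑ s ∈ Finset.range n, F (r + s * k') ω = (m:ℝ) - 1} ∩ {ω | F j ω = 1})
            + μ ({ω | ∑ s ∈ Finset.range n, F (r + s * k') ω = (m:ℝ)} ∩ {ω | F j ω = 1}ᶜ) := by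
      intro m
      rw [← hsplit1 (m:ℝ), ← hsplit0 (m:ℝ), ← Set.diff_eq]
      exact (measure_inter_add_diff _ hmeas1).symm
    -- one-step conditional inequality
    have hkey : ∀ m : ℕ,
        μ ({ω | ∑ s ∈ Finset.range n, F (r + s * k') ω = (m:ℝ)} ∩ {ω | F j ω = 1}ᶜ)
          + ENNReal.ofReal (Real.exp (-t)) *
            μ ({ω | ∑ s ∈ Finset.range n, F (r + s * k') ω = (m:ℝ)} ∩ {ω | F j ω = 1})
          ≤ ENNReal.ofReal (1 - ρ*(1 - Real.exp (-t))) *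
            μ {ω | ∑ s ∈ Finset.range n, F (r + s * k') ω = (m:ℝ)} := by
      intro m
      set A := {ω | ∑ s ∈ Finset.range n, F (r + s * k') ω = (m:ℝ)} with hAdef
      by_cases hA : μ A = 0
      · have h1 : μ (A ∩ {ω | F j ω = 1}ᶜ) = 0 :=
          measure_mono_null Set.inter_subset_left hA
        have h2 : μ (A ∩ {ω | F j ω = 1}) = 0 :=
          measure_mono_null Set.inter_subset_left hA
        simp [h1, h2, hA]
      · have hpos : 0 < μ A := pos_iff_ne_zero.mpr hA
        have hc := hcond j A (hAmeasM m) hpos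
        have hab : μ (A ∩ {ω | F j ω = 1}) + μ (A ∩ {ω | F j ω = 1}ᶜ) = μ A := by
          rw [← Set.diff_eq]
          exact measure_inter_add_diff _ hmeas1
        have hfa : μ (A ∩ {ω | F j ω = 1}) ≠ ⊤ := measure_ne_top μ _
        have hfb : μ (A ∩ {ω | F j ω = 1}ᶜ) ≠ ⊤ := measure_ne_top μ _
        have hfA : μ A ≠ ⊤ := measure_ne_top μ _
        set a := μ (A ∩ {ω | F j ω = 1}) with hadef
        set b := μ (A ∩ {ω | F j ω = 1}ᶜ) with hbdef
        rw [← hab]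
        have hcr : ρ * ((a).toReal + (b).toReal) ≤ (a).toReal := by
          have := (ENNReal.toReal_le_toReal (by finiteness) hfa).mpr hc
          rw [ENNReal.toReal_mul, ENNReal.toReal_ofReal hρ0.le, ← hab,
            ENNReal.toReal_add hfa hfb] at this
          exact this
        rw [← ENNReal.toReal_le_toReal (by finiteness) (by finiteness)]
        rw [ENNReal.toReal_add hfb (by finiteness), ENNReal.toReal_mul, ENNReal.toReal_mul,
          ENNReal.toReal_ofReal het0.le, ENNReal.toReal_ofReal hq0.le,
          ENNReal.toReal_add hfa hfb]
        nlinarith [ENNReal.toReal_nonneg (a := a), ENNReal.toReal_nonneg (a := b),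
          mul_le_mul_of_nonneg_left hcr (by linarith : (0:ℝ) ≤ 1 - Real.exp (-t))]
    -- empty-set facts
    have hempty1 : {ω | ∑ s ∈ Finset.range n, F (r + s * k') ω = ((0:ℕ):ℝ) - 1} ∩ {ω | F j ω = 1}
        = (∅ : Set Ω) := by
      ext ω
      simp only [Set.mem_inter_iff, Set.mem_setOf_eq, Set.mem_empty_iff_false, iff_false,
        not_and]
      intro h
      have := hSnn n ω
      rw [h] at this
      norm_num at this
    have hempty2 : {ω | ∑ s ∈ Finset.range n, F (r + s * k') ω = ((n+1:ℕ):ℝ)} ∩ {ω | F j ω = 1}ᶜ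
        = (∅ : Set Ω) := by
      ext ω
      simp only [Set.mem_inter_iff, Set.mem_setOf_eq, Set.mem_empty_iff_false, iff_false,
        not_and]
      intro h
      have := hSle n ω
      rw [h] at this
      push_cast at this
      linarith
    calc ∑ m ∈ Finset.range (n+1+1), ENNReal.ofReal (Real.exp (-t*m)) *
            μ {ω | ∑ s ∈ Finset.range (n+1), F (r + s * k') ω = (m:ℝ)}
        = ∑ m ∈ Finset.range (n+2),
            (ENNReal.ofReal (Real.exp (-t*m)) *
              μ ({ω | ∑ s ∈ Finset.range n, F (r + s * k') ω = (m:ℝ) - 1} ∩ {ω | F j ω = 1})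
            + ENNReal.ofReal (Real.exp (-t*m)) *
              μ ({ω | ∑ s ∈ Finset.range n, F (r + s * k') ω = (m:ℝ)} ∩ {ω | F j ω = 1}ᶜ)) := by
          refine Finset.sum_congr rfl fun m _ => ?_
          rw [hdecomp m, mul_add]
      _ = (∑ m ∈ Finset.range (n+2), ENNReal.ofReal (Real.exp (-t*m)) *
              μ ({ω | ∑ s ∈ Finset.range n, F (r + s * k') ω = (m:ℝ) - 1} ∩ {ω | F j ω = 1}))
          + ∑ m ∈ Finset.range (n+2), ENNReal.ofReal (Real.exp (-t*m)) *
              μ ({ω | ∑ s ∈ Finset.range n, F (r + s * k') ω = (m:ℝ)} ∩ {ω | F j ω = 1}ᶜ) :=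
          Finset.sum_add_distrib
      _ = (∑ m ∈ Finset.range (n+1), ENNReal.ofReal (Real.exp (-t)) *
              (ENNReal.ofReal (Real.exp (-t*m)) *
                μ ({ω | ∑ s ∈ Finset.range n, F (r + s * k') ω = (m:ℝ)} ∩ {ω | F j ω = 1})))
          + ∑ m ∈ Finset.range (n+1), ENNReal.ofReal (Real.exp (-t*m)) *
              μ ({ω | ∑ s ∈ Finset.range n, F (r + s * k') ω = (m:ℝ)} ∩ {ω | F j ω = 1}ᶜ) := by
          rw [Finset.sum_range_succ' (n := n+1), Finset.sum_range_succ (n := n+1)]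
          rw [hempty1, hempty2]
          simp only [measure_empty, mul_zero, add_zero]
          congr 1
          refine Finset.sum_congr rfl fun m _ => ?_
          have hset : {ω | ∑ s ∈ Finset.range n, F (r + s * k') ω = ((m+1:ℕ):ℝ) - 1}
              = {ω | ∑ s ∈ Finset.range n, F (r + s * k') ω = (m:ℝ)} := by
            have hv : ((m+1:ℕ):ℝ) - 1 = (m:ℝ) := by push_cast; ring
            rw [hv]
          rw [hset, ← mul_assoc, ← ENNReal.ofReal_mul (Real.exp_pos _).le, ← Real.exp_add]
          congr 2
          push_cast
          ring
      _ = ∑ m ∈ Finset.range (n+1), ENNReal.ofReal (Real.exp (-t*m)) *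
            (μ ({ω | ∑ s ∈ Finset.range n, F (r + s * k') ω = (m:ℝ)} ∩ {ω | F j ω = 1}ᶜ)
              + ENNReal.ofReal (Real.exp (-t)) *
                μ ({ω | ∑ s ∈ Finset.range n, F (r + s * k') ω = (m:ℝ)} ∩ {ω | F j ω = 1})) := by
          rw [← Finset.sum_add_distrib]
          refine Finset.sum_congr rfl fun m _ => ?_
          ring
      _ ≤ ∑ m ∈ Finset.range (n+1), ENNReal.ofReal (Real.exp (-t*m)) *
            (ENNReal.ofReal (1 - ρ*(1 - Real.exp (-t))) *
              μ {ω | ∑ s ∈ Finset.range n, F (r + s * k') ω = (m:ℝ)}) :=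
          Finset.sum_le_sum fun m _ => mul_le_mul_right (hkey m) _
      _ = ENNReal.ofReal (1 - ρ*(1 - Real.exp (-t))) *
            ∑ m ∈ Finset.range (n+1), ENNReal.ofReal (Real.exp (-t*m)) *
              μ {ω | ∑ s ∈ Finset.range n, F (r + s * k') ω = (m:ℝ)} := by
          rw [Finset.mul_sum]
          refine Finset.sum_congr rfl fun m _ => ?_
          ring
      _ ≤ ENNReal.ofReal (1 - ρ*(1 - Real.exp (-t))) *
            ENNReal.ofReal (1 - ρ*(1 - Real.exp (-t))) ^ n := mul_le_mul_right ih _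
      _ = ENNReal.ofReal (1 - ρ*(1 - Real.exp (-t))) ^ (n+1) := (pow_succ' _ _).symm

private lemma chain_markov {Ω : Type*} [MeasurableSpace Ω]
    (μ : Measure Ω) [IsProbabilityMeasure μ] (k : ℕ)
    (F : ℕ → Ω → ℝ) (ρ : ℝ) (hρ0 : 0 < ρ) (hρ1 : ρ < 1)
    (hFmeas : ∀ j, Measurable (F j))
    (hF01 : ∀ j ω, F j ω = 0 ∨ F j ω = 1)
    (hcond : ∀ j : ℕ, ∀ A : Set Ω,
      MeasurableSet[⨆ i : {i : ℕ // i + k ≤ j}, MeasurableSpace.comap (F i) inferInstance] A →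
      0 < μ A → ENNReal.ofReal ρ * μ A ≤ μ (A ∩ {ω | F j ω = 1}))
    (t : ℝ) (ht : 0 < t) (k' : ℕ) (hkk' : k ≤ k') (r : ℕ) (b : ℝ) (n : ℕ) :
    μ {ω | ∑ s ∈ Finset.range n, F (r + s * k') ω ≤ b}
      ≤ ENNReal.ofReal (Real.exp (t*b)) * ENNReal.ofReal (1 - ρ*(1 - Real.exp (-t))) ^ n := by
  have hval : ∀ ω, ∃ m : ℕ, m ≤ n ∧ ∑ s ∈ Finset.range n, F (r + s * k') ω = (m:ℝ) := by
    intro ω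
    induction n with
    | zero => exact ⟨0, le_refl 0, by simp⟩
    | succ n ihn =>
      obtain ⟨m, hm, hsum⟩ := ihn
      rcases hF01 (r + n * k') ω with h | h
      · exact ⟨m, by omega, by rw [Finset.sum_range_succ, hsum, h, add_zero]⟩
      · exact ⟨m+1, by omega, by rw [Finset.sum_range_succ, hsum, h]; push_cast; ring⟩
  have hsub : {ω | ∑ s ∈ Finset.range n, F (r + s * k') ω ≤ b}
      ⊆ ⋃ m ∈ (Finset.range (n+1)).filter (fun m : ℕ => (m:ℝ) ≤ b),
          {ω | ∑ s ∈ Finset.range n, F (r + s * k') ω = (m:ℝ)} := by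
    intro ω hω
    obtain ⟨m, hm, hsum⟩ := hval ω
    simp only [Set.mem_setOf_eq] at hω
    refine Set.mem_biUnion (Finset.mem_filter.mpr ⟨Finset.mem_range.mpr (by omega), ?_⟩) hsum
    rw [← hsum]; exact hω
  calc μ {ω | ∑ s ∈ Finset.range n, F (r + s * k') ω ≤ b}
      ≤ ∑ m ∈ (Finset.range (n+1)).filter (fun m : ℕ => (m:ℝ) ≤ b),
          μ {ω | ∑ s ∈ Finset.range n, F (r + s * k') ω = (m:ℝ)} :=
        le_trans (measure_mono hsub) (measure_biUnion_finset_le _ _)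
    _ ≤ ∑ m ∈ (Finset.range (n+1)).filter (fun m : ℕ => (m:ℝ) ≤ b),
          ENNReal.ofReal (Real.exp (t*b)) * (ENNReal.ofReal (Real.exp (-t*m)) *
            μ {ω | ∑ s ∈ Finset.range n, F (r + s * k') ω = (m:ℝ)}) := by
        refine Finset.sum_le_sum fun m hm => ?_
        have hmb : (m:ℝ) ≤ b := (Finset.mem_filter.mp hm).2
        rw [← mul_assoc, ← ENNReal.ofReal_mul (Real.exp_pos _).le, ← Real.exp_add]
        refine le_mul_of_one_le_left zero_le ?_
        rw [show (1 : ENNReal) = ENNReal.ofReal 1 by simp]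
        refine ENNReal.ofReal_le_ofReal ?_
        rw [← Real.exp_zero]
        refine Real.exp_le_exp.mpr ?_
        nlinarith
    _ = ENNReal.ofReal (Real.exp (t*b)) *
          ∑ m ∈ (Finset.range (n+1)).filter (fun m : ℕ => (m:ℝ) ≤ b),
            ENNReal.ofReal (Real.exp (-t*m)) *
              μ {ω | ∑ s ∈ Finset.range n, F (r + s * k') ω = (m:ℝ)} :=
        (Finset.mul_sum _ _ _).symm
    _ ≤ ENNReal.ofReal (Real.exp (t*b)) *
          ∑ m ∈ Finset.range (n+1),
            ENNReal.ofReal (Real.exp (-t*m)) *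
              μ {ω | ∑ s ∈ Finset.range n, F (r + s * k') ω = (m:ℝ)} :=
        mul_le_mul_right (Finset.sum_le_sum_of_subset (Finset.filter_subset _ _)) _
    _ ≤ ENNReal.ofReal (Real.exp (t*b)) * ENNReal.ofReal (1 - ρ*(1 - Real.exp (-t))) ^ n :=
        mul_le_mul_right (chain_chernoff μ k F ρ hρ0 hρ1 hFmeas hF01 hcond t ht k' hkk' r n) _


private lemma exists_good_t (ρ ε : ℝ) (hε : 0 < ε) :
    ∃ t : ℝ, 0 < t ∧ (1 - ρ*(1 - Real.exp (-t))) * Real.exp (t*(ρ-ε)) < 1 := by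
  set f : ℝ → ℝ := fun t => (1 - ρ*(1 - Real.exp (-t))) * Real.exp (t*(ρ-ε)) with hf
  have h1 : HasDerivAt (fun t : ℝ => 1 - ρ*(1 - Real.exp (-t))) (-ρ) 0 := by
    have e1 : HasDerivAt (fun t : ℝ => -t) (-1) 0 := (hasDerivAt_id 0).neg
    have e2 : HasDerivAt (fun t : ℝ => Real.exp (-t)) (Real.exp (-0) * -1) 0 := e1.exp
    have e3 := ((hasDerivAt_const (0:ℝ) (1:ℝ)).sub e2).const_mul ρ
    have e4 : HasDerivAt (fun t : ℝ => 1 - ρ*(1 - Real.exp (-t))) (0 - ρ * (0 - Real.exp (-0) * -1)) 0 :=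
      (hasDerivAt_const (0:ℝ) (1:ℝ)).sub e3
    convert e4 using 1
    norm_num [Real.exp_zero]
  have h2 : HasDerivAt (fun t : ℝ => Real.exp (t*(ρ-ε))) (ρ-ε) 0 := by
    have e1 : HasDerivAt (fun t : ℝ => t*(ρ-ε)) (ρ-ε) 0 := by
      simpa using (hasDerivAt_id (0:ℝ)).mul_const (ρ-ε)
    have e2 := e1.exp
    convert e2 using 1
    norm_num [Real.exp_zero]
  have hd : HasDerivAt f (-ε) 0 := by
    have : HasDerivAt f (-ρ * Real.exp (0*(ρ-ε)) + (1 - ρ*(1 - Real.exp (-0))) * (ρ-ε)) 0 :=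
      h1.mul h2
    convert this using 1
    norm_num [Real.exp_zero]
    ring
  rw [hasDerivAt_iff_tendsto_slope] at hd
  have hev : ∀ᶠ x in nhdsWithin (0:ℝ) {(0:ℝ)}ᶜ, slope f 0 x < 0 :=
    hd.eventually (gt_mem_nhds (show -ε < 0 by linarith))
  have hev' : ∀ᶠ x in nhdsWithin (0:ℝ) (Set.Ioi 0), slope f 0 x < 0 :=
    hev.filter_mono (nhdsWithin_mono 0
      (fun x hx => Set.mem_compl_singleton_iff.mpr (ne_of_gt hx)))
  obtain ⟨t, hts, htpos⟩ := (hev'.and self_mem_nhdsWithin).exists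
  have htpos' : (0:ℝ) < t := htpos
  have hf0 : f 0 = 1 := by simp [hf, Real.exp_zero]
  rw [slope_def_field] at hts
  have hmul : (f t - f 0) / (t - 0) * t < 0 := mul_neg_of_neg_of_pos hts htpos'
  rw [sub_zero, div_mul_cancel₀ _ (ne_of_gt htpos')] at hmul
  exact ⟨t, htpos', by rw [hf0] at hmul; simpa [hf] using (by linarith : f t < 1)⟩

/-- Large deviations with a gap: if the conditional probability that F_j = 1
given F₁,...,F_{j-k} is at least ρ, then for every ε > 0 there are C₃, C₄ > 0 with
μ(∑_{j<ℓ} F_j ≤ (ρ-ε)ℓ) ≤ C₃ e^{-C₄ ℓ} for all ℓ. -/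
theorem large_deviations_gap {Ω : Type*} [MeasurableSpace Ω]
    (μ : Measure Ω) [IsProbabilityMeasure μ] (k : ℕ)
    (F : ℕ → Ω → ℝ) (ρ : ℝ) (hρ0 : 0 < ρ) (hρ1 : ρ < 1)
    (hFmeas : ∀ j, Measurable (F j))
    (hF01 : ∀ j ω, F j ω = 0 ∨ F j ω = 1)
    (hcond : ∀ j : ℕ, ∀ A : Set Ω,
      MeasurableSet[⨆ i : {i : ℕ // i + k ≤ j}, MeasurableSpace.comap (F i) inferInstance] A →
      0 < μ A → ENNReal.ofReal ρ * μ A ≤ μ (A ∩ {ω | F j ω = 1})) :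
    ∀ ε > (0 : ℝ), ∃ C₃ > (0 : ℝ), ∃ C₄ > (0 : ℝ), ∀ ℓ : ℕ,
      μ {ω | ∑ j ∈ Finset.range ℓ, F j ω ≤ (ρ - ε) * ℓ}
        ≤ ENNReal.ofReal (C₃ * Real.exp (-C₄ * ℓ)) := by
  intro ε hε
  set k' := max k 1 with hk'def
  have hk'pos : 0 < k' := lt_of_lt_of_le one_pos (le_max_right k 1)
  have hkk' : k ≤ k' := le_max_left k 1
  have hk'R : (0:ℝ) < (k':ℝ) := by exact_mod_cast hk'pos
  obtain ⟨t, ht, hft⟩ := exists_good_t ρ ε hε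
  have het : Real.exp (-t) < 1 := Real.exp_lt_one_iff.mpr (by linarith)
  have hq0 : 0 < 1 - ρ*(1 - Real.exp (-t)) := by nlinarith [Real.exp_pos (-t)]
  set q := 1 - ρ*(1 - Real.exp (-t)) with hqdef
  set fv := q * Real.exp (t*(ρ-ε)) with hfvdef
  have hfv0 : 0 < fv := mul_pos hq0 (Real.exp_pos _)
  have hfv1 : fv < 1 := hft
  set L := Real.log fv with hLdef
  have hL0 : L < 0 := Real.log_neg hfv0 hfv1
  refine ⟨(k' : ℝ) * Real.exp (-L), by positivity, -L / k', div_pos (by linarith) hk'R, ?_⟩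
  intro ℓ
  set nr : ℕ → ℕ := fun r => (ℓ - r + (k' - 1)) / k' with hnrdef
  have hsumnr : ∑ r ∈ Finset.range k', nr r = ℓ := by
    have h := sum_split' k' ℓ hk'pos (fun _ => (1:ℕ))
    simpa using h.symm
  -- lower bound on nr r
  have hge : ∀ r, r < k' → ((ℓ:ℝ)/(k':ℝ) - 1 ≤ (nr r : ℝ)) := by
    intro r hr
    set a := ℓ - r + (k' - 1) with hadef
    have hla : ℓ ≤ a := by omega
    have h1 : a / k' * k' + a % k' = a := Nat.div_add_mod' a k'
    have h2 : a % k' < k' := Nat.mod_lt _ hk'pos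
    have key : ℓ < (nr r + 1) * k' := by
      have : nr r = a / k' := rfl
      rw [this, add_mul, one_mul]
      generalize a / k' * k' = z at h1 ⊢
      omega
    have keyR : (ℓ:ℝ) < ((nr r : ℝ) + 1) * k' := by exact_mod_cast key
    rw [div_sub_one (ne_of_gt hk'R), div_le_iff₀ hk'R]
    linarith
  -- inclusion into the union over residue classes
  have hincl : {ω | ∑ j ∈ Finset.range ℓ, F j ω ≤ (ρ - ε) * ℓ}
      ⊆ ⋃ r ∈ Finset.range k',
          {ω | ∑ s ∈ Finset.range (nr r), F (r + s * k') ω ≤ (ρ - ε) * (nr r : ℝ)} := by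
    intro ω hω
    simp only [Set.mem_setOf_eq] at hω
    by_contra hcon
    simp only [Set.mem_iUnion, Set.mem_setOf_eq, not_exists, not_le] at hcon
    have hcon' : ∀ r ∈ Finset.range k',
        (ρ - ε) * (nr r : ℝ) < ∑ s ∈ Finset.range (nr r), F (r + s * k') ω := by
      intro r hr
      exact hcon r (by simpa using hr)
    have hlt : ∑ r ∈ Finset.range k', (ρ - ε) * (nr r : ℝ)
        < ∑ r ∈ Finset.range k', ∑ s ∈ Finset.range (nr r), F (r + s * k') ω :=
      Finset.sum_lt_sum_of_nonempty (Finset.nonempty_range_iff.mpr (by omega)) hcon'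
    rw [← sum_split' k' ℓ hk'pos (fun j => F j ω)] at hlt
    have heq : ∑ r ∈ Finset.range k', (ρ - ε) * (nr r : ℝ) = (ρ - ε) * ℓ := by
      rw [← Finset.mul_sum]
      congr 1
      rw [← hsumnr]
      push_cast
      rfl
    rw [heq] at hlt
    linarith
  calc μ {ω | ∑ j ∈ Finset.range ℓ, F j ω ≤ (ρ - ε) * ℓ}
      ≤ μ (⋃ r ∈ Finset.range k',
          {ω | ∑ s ∈ Finset.range (nr r), F (r + s * k') ω ≤ (ρ - ε) * (nr r : ℝ)}) :=
        measure_mono hincl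
    _ ≤ ∑ r ∈ Finset.range k',
          μ {ω | ∑ s ∈ Finset.range (nr r), F (r + s * k') ω ≤ (ρ - ε) * (nr r : ℝ)} :=
        measure_biUnion_finset_le _ _
    _ ≤ ∑ r ∈ Finset.range k',
          ENNReal.ofReal (Real.exp (t*((ρ - ε) * (nr r : ℝ)))) * ENNReal.ofReal q ^ (nr r) :=
        Finset.sum_le_sum fun r _ =>
          chain_markov μ k F ρ hρ0 hρ1 hFmeas hF01 hcond t ht k' hkk' r _ (nr r)
    _ = ∑ r ∈ Finset.range k', ENNReal.ofReal (fv ^ (nr r)) := by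
        refine Finset.sum_congr rfl fun r _ => ?_
        rw [← ENNReal.ofReal_pow hq0.le, ← ENNReal.ofReal_mul (Real.exp_pos _).le]
        have hx : Real.exp (t*((ρ - ε) * (nr r : ℝ))) = Real.exp (t*(ρ - ε)) ^ nr r := by
          rw [← Real.exp_nat_mul]
          congr 1
          ring
        rw [hx, hfvdef, mul_pow, mul_comm]
    _ ≤ ∑ r ∈ Finset.range k',
          ENNReal.ofReal (Real.exp (-L) * Real.exp ((L/(k':ℝ)) * ℓ)) := by
        refine Finset.sum_le_sum fun r hr => ?_
        refine ENNReal.ofReal_le_ofReal ?_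
        have hr' : r < k' := Finset.mem_range.mp hr
        calc fv ^ (nr r) = Real.exp L ^ (nr r) := by rw [hLdef, Real.exp_log hfv0]
          _ = Real.exp ((nr r : ℝ) * L) := (Real.exp_nat_mul L (nr r)).symm
          _ ≤ Real.exp (((ℓ:ℝ)/(k':ℝ) - 1) * L) := by
              refine Real.exp_le_exp.mpr ?_
              nlinarith [hge r hr']
          _ = Real.exp (-L) * Real.exp ((L/(k':ℝ)) * ℓ) := by
              rw [← Real.exp_add]
              congr 1
              field_simp
              ring
    _ = ENNReal.ofReal ((k':ℝ) * Real.exp (-L) * Real.exp (-(-L / (k':ℝ)) * ℓ)) := by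
        rw [Finset.sum_const, Finset.card_range, nsmul_eq_mul,
          ← ENNReal.ofReal_natCast k', ← ENNReal.ofReal_mul (Nat.cast_nonneg k')]
        congr 1
        have harg : -(-L/(k':ℝ)) * (ℓ:ℝ) = (L/(k':ℝ)) * ℓ := by ring
        rw [harg]
        ring
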